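/- Let P be a finite ranked poset with rank function r, P* ⊇ min(P) ∪ max(P), and λ^r the induced marking. For any partition P̃ = C ⊔ O, consider the translate Q of the marked chain-order polytope O_{C,O}(P,λ^r) ⊆ ℝ^{P̃} by the negative of its interior lattice point (x_p = r(p) for p ∈ O, x_p = 1 for p ∈ C). Then every facet-defining inequality of Q has the form α(x) ≤ 1 with α an integral linear functional; consequently the polar dual Q° is a lattice polytope, i.e., Q is reflexive. -/

import Mathlib

open scoped Classical

/-- A saturated chain `a ≺ p₁ ≺ ⋯ ≺ p_r ≺ b` with all interior elements in `C`. -/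
def SatChain {P : Type*} [PartialOrder P] (C : Set P) (a b : P) (l : List P) : Prop :=
  (∀ p ∈ l, p ∈ C) ∧ List.Chain' (· ⋖ ·) (a :: (l ++ [b]))

/-- The marked chain-order polyhedron `O_{C,O}(P,λ) ⊆ ℝ^P`. -/
def MCO {P : Type*} [PartialOrder P] (Pstar C O : Set P) (lam : P → ℝ) : Set (P → ℝ) :=
  {x | (∀ a ∈ Pstar, x a = lam a) ∧ (∀ p ∈ C, 0 ≤ x p) ∧
    ∀ a b l, a ∈ Pstar ∪ O → b ∈ Pstar ∪ O → SatChain C a b l →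
      (l.map x).sum ≤ x b - x a}

/-- Extend a point `x ∈ ℝ^{P̃}` by the marking `λ` on `P*`. -/
noncomputable def extFun {P : Type*} (Pstar : Set P) (lam : P → ℝ)
    (x : {p : P // p ∉ Pstar} → ℝ) : P → ℝ :=
  fun p => if h : p ∈ Pstar then lam p else x ⟨p, h⟩

/-- The projected marked chain-order polytope `O_{C,O}(P,λ) ⊆ ℝ^{P̃}`. -/
def MCOproj {P : Type*} [PartialOrder P] (Pstar C O : Set P) (lam : P → ℝ) :
    Set ({p : P // p ∉ Pstar} → ℝ) :=
  {x | extFun Pstar lam x ∈ MCO Pstar C O lam}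

/-- A point of `ℝ^ι` is a lattice point if all its coordinates are integers. -/
def IsLat {ι : Type*} (x : ι → ℝ) : Prop := ∀ p, ∃ n : ℤ, x p = n

/-- The polar dual of `Q ⊆ ℝ^ι`, with functionals identified with vectors via the
standard pairing. -/
def polarDual {ι : Type*} [Fintype ι] (Q : Set (ι → ℝ)) : Set (ι → ℝ) :=
  {a | ∀ x ∈ Q, ∑ p, a p * x p ≤ 1}


noncomputable def ext0 {P : Type*} (Pstar : Set P) (w : {p : P // p ∉ Pstar} → ℝ) : P → ℝ :=
  fun p => if h : p ∉ Pstar then w ⟨p, h⟩ else 0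

noncomputable def chainFun {P : Type*} (Pstar : Set P) (a b : P) (l : List P) :
    {p : P // p ∉ Pstar} → ℝ :=
  fun q => (l.count q.1 : ℝ) + (if q.1 = a then 1 else 0) - (if q.1 = b then 1 else 0)

lemma sum_delta {P : Type*} (Pstar : Set P) [Fintype {p : P // p ∉ Pstar}]
    (w : {p : P // p ∉ Pstar} → ℝ) (c : P) :
    ∑ q, (if q.1 = c then (1 : ℝ) else 0) * w q = ext0 Pstar w c := by
  by_cases hc : c ∉ Pstar
  · rw [ext0]; simp only [dif_pos hc]
    rw [Finset.sum_eq_single (⟨c, hc⟩ : {p : P // p ∉ Pstar})]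
    · simp
    · intro q _ hq
      rw [if_neg, zero_mul]
      exact fun h => hq (Subtype.ext h)
    · simp
  · rw [ext0]; simp only [dif_neg hc]
    apply Finset.sum_eq_zero
    intro q _
    rw [if_neg, zero_mul]
    rintro h
    exact hc (h ▸ q.2)

lemma sum_count {P : Type*} (Pstar : Set P) [Fintype {p : P // p ∉ Pstar}]
    (w : {p : P // p ∉ Pstar} → ℝ) :
    ∀ l : List P, (∀ p ∈ l, p ∉ Pstar) →
      ∑ q, (l.count q.1 : ℝ) * w q = (l.map (ext0 Pstar w)).sum := by
  intro l
  induction l with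
  | nil => intro _; simp
  | cons p l ih =>
    intro h
    have hp : p ∉ Pstar := h p List.mem_cons_self
    have hl : ∀ x ∈ l, x ∉ Pstar := fun x hx => h x (List.mem_cons_of_mem _ hx)
    have : ∀ q : {p : P // p ∉ Pstar},
        ((p :: l).count q.1 : ℝ) * w q
          = (l.count q.1 : ℝ) * w q + (if q.1 = p then (1:ℝ) else 0) * w q := by
      intro q
      simp only [List.count_cons, beq_iff_eq]
      rcases eq_or_ne q.1 p with hq | hq
      · simp [hq]; ring
      · simp [hq, Ne.symm hq]
    rw [Finset.sum_congr rfl (fun q _ => this q), Finset.sum_add_distrib, ih hl,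
      sum_delta]
    rw [List.map_cons, List.sum_cons, add_comm]

lemma pairing {P : Type*} (Pstar : Set P) [Fintype {p : P // p ∉ Pstar}]
    (a b : P) (l : List P) (hl : ∀ p ∈ l, p ∉ Pstar)
    (w : {p : P // p ∉ Pstar} → ℝ) :
    ∑ q, chainFun Pstar a b l q * w q
      = (l.map (ext0 Pstar w)).sum + ext0 Pstar w a - ext0 Pstar w b := by
  have : ∀ q : {p : P // p ∉ Pstar}, chainFun Pstar a b l q * w q
      = (l.count q.1 : ℝ) * w q + (if q.1 = a then (1:ℝ) else 0) * w q
        - (if q.1 = b then (1:ℝ) else 0) * w q := by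
    intro q; rw [chainFun]; ring
  rw [Finset.sum_congr rfl (fun q _ => this q), Finset.sum_sub_distrib,
    Finset.sum_add_distrib, sum_count Pstar w l hl, sum_delta, sum_delta]

lemma rank_chain {P : Type*} [PartialOrder P] (r : P → ℤ)
    (hr : ∀ p q : P, p ⋖ q → r p = r q - 1) :
    ∀ (l : List P) (a b : P), List.Chain (· ⋖ ·) a (l ++ [b]) →
      r b = r a + l.length + 1 := by
  intro l
  induction l with
  | nil =>
    intro a b h
    rw [List.nil_append] at h; unfold List.Chain at h; rw [List.chain_cons] at h
    have := hr a b h.1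
    simp; omega
  | cons p l ih =>
    intro a b h
    rw [List.cons_append] at h; unfold List.Chain at h; rw [List.chain_cons] at h
    have h1 := hr a p h.1
    have h2 := ih p b h.2
    simp only [List.length_cons]
    push_cast at *
    omega

lemma sum_map_shift {P : Type*} :
    ∀ (l : List P) (f g : P → ℝ), (∀ p ∈ l, g p = f p - 1) →
      (l.map g).sum = (l.map f).sum - l.length := by
  intro l
  induction l with
  | nil => intro f g _; simp
  | cons p l ih =>
    intro f g h
    simp only [List.map_cons, List.sum_cons, List.length_cons]
    rw [ih f g (fun x hx => h x (List.mem_cons_of_mem _ hx)),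
      h p List.mem_cons_self]
    push_cast
    ring

lemma chainFun_mem {P : Type*} [PartialOrder P] (Pstar : Set P) (a b : P) (l : List P)
    (h : List.Chain' (· ⋖ ·) (a :: (l ++ [b]))) (q : {p : P // p ∉ Pstar}) :
    chainFun Pstar a b l q ∈ ({-1, 0, 1} : Set ℝ) := by
  have hpw : (a :: (l ++ [b])).Pairwise (· < ·) := by
    have h' : List.Chain' (· < ·) (a :: (l ++ [b])) :=
      List.IsChain.imp (fun _ _ hc => hc.lt) h
    exact List.isChain_iff_pairwise.1 h'
  rw [List.pairwise_cons] at hpw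
  obtain ⟨ha, hpw2⟩ := hpw
  rw [List.pairwise_append] at hpw2
  obtain ⟨hlp, _, hlb⟩ := hpw2
  have hab : a < b := ha b (by simp)
  have hal : a ∉ l := fun hm => lt_irrefl a (ha a (List.mem_append_left _ hm))
  have hbl : b ∉ l := fun hm => lt_irrefl b (hlb b hm b (by simp))
  have hnd : l.Nodup := hlp.imp (fun hc => ne_of_lt hc)
  rw [chainFun]
  by_cases hq : q.1 ∈ l
  · have hc1 : l.count q.1 = 1 := List.count_eq_one_of_mem hnd hq
    rw [hc1, if_neg (fun hh : q.1 = a => hal (hh ▸ hq)), if_neg (fun hh : q.1 = b => hbl (hh ▸ hq))]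
    norm_num
  · have hc0 : l.count q.1 = 0 := List.count_eq_zero.2 hq
    rw [hc0]
    rcases eq_or_ne q.1 a with h1 | h1 <;> rcases eq_or_ne q.1 b with h2 | h2
    · exact absurd (h1.symm.trans h2) hab.ne
    · rw [if_pos h1, if_neg h2]; norm_num
    · rw [if_neg h1, if_pos h2]; norm_num
    · rw [if_neg h1, if_neg h2]; norm_num

lemma sum_negdelta {ι : Type*} [Fintype ι] [DecidableEq ι] (p : ι) (y : ι → ℝ) :
    ∑ q, (if q = p then (-1 : ℝ) else 0) * y q = -(y p) := by
  rw [Finset.sum_eq_single p]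
  · simp
  · intro q _ hq; rw [if_neg hq, zero_mul]
  · simp


/-- for a finite ranked poset with rank function `r`,
`P* ⊇ min(P) ∪ max(P)` and any partition `P̃ = C ⊔ O`, the translate `Q` of
`O_{C,O}(P,λʳ)` by the negative of its interior lattice point has `0` in its interior and
its polar dual is a lattice polytope (the convex hull of finitely many lattice points),
i.e., `Q` is reflexive. -/
theorem mco_rank_reflexive {P : Type*} [PartialOrder P] [Fintype P]
    (r : P → ℤ) (hr : ∀ p q : P, p ⋖ q → r p = r q - 1)
    (Pstar C O : Set P) [Fintype {p : P // p ∉ Pstar}]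
    (hmin : ∀ p : P, IsMin p → p ∈ Pstar)
    (hmax : ∀ p : P, IsMax p → p ∈ Pstar)
    (hcover : C ∪ O = Pstarᶜ) (hdisj : Disjoint C O) :
    ∀ Q : Set ({p : P // p ∉ Pstar} → ℝ),
      Q = (fun x => x - fun p : {p : P // p ∉ Pstar} =>
            if p.1 ∈ C then (1 : ℝ) else (r p.1 : ℝ)) ''
          MCOproj Pstar C O (fun a => (r a : ℝ)) →
      (0 : {p : P // p ∉ Pstar} → ℝ) ∈ interior Q ∧
      ∃ A : Finset ({p : P // p ∉ Pstar} → ℝ), (∀ α ∈ A, IsLat α) ∧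
        polarDual Q = convexHull ℝ (A : Set ({p : P // p ∉ Pstar} → ℝ)) := by
  intro Q hQ
  classical
  set z : {p : P // p ∉ Pstar} → ℝ := fun p => if p.1 ∈ C then (1 : ℝ) else (r p.1 : ℝ) with hz
  set lam : P → ℝ := fun a => (r a : ℝ) with hlam
  have hCP : ∀ p ∈ C, p ∉ Pstar := fun p hp => by
    have : p ∈ Pstarᶜ := hcover ▸ Set.mem_union_left O hp
    exact this
  have hOC : ∀ p ∈ O, p ∉ C := fun p hp hc => Set.disjoint_left.mp hdisj hc hp
  -- the description set
  set D : Set ({p : P // p ∉ Pstar} → ℝ) :=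
    {α | (∃ p : {p : P // p ∉ Pstar}, p.1 ∈ C ∧ α = fun q => if q = p then (-1 : ℝ) else 0) ∨
      ∃ a b l, a ∈ Pstar ∪ O ∧ b ∈ Pstar ∪ O ∧ SatChain C a b l ∧
        α = chainFun Pstar a b l} with hD
  -- bridge computation
  have bridge : ∀ (x : {p : P // p ∉ Pstar} → ℝ) (a b : P) (l : List P), a ∈ Pstar ∪ O → b ∈ Pstar ∪ O →
      SatChain C a b l →
      ∑ q, chainFun Pstar a b l q * (x - z) q
        = (l.map (extFun Pstar lam x)).sum
          - (extFun Pstar lam x b - extFun Pstar lam x a) + 1 := by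
    intro x a b l ha hb hsc
    set X := extFun Pstar lam x with hX
    have hlC := hsc.1
    have hlP : ∀ p ∈ l, p ∉ Pstar := fun p hp => hCP p (hlC p hp)
    rw [pairing Pstar a b l hlP]
    have hend : ∀ c, c ∈ Pstar ∪ O → ext0 Pstar (x - z) c = X c - (r c : ℝ) := by
      intro c hc
      rw [ext0]
      by_cases h : c ∉ Pstar
      · rw [dif_pos h]
        have hcO : c ∈ O := hc.resolve_left h
        have hcC : c ∉ C := hOC c hcO
        simp only [Pi.sub_apply]
        rw [hX, extFun]
        simp only [dif_neg h]
        rw [hz]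
        simp [hcC]
      · rw [dif_neg h, hX, extFun, dif_pos (not_not.1 h), hlam]
        ring
    have hmem : ∀ p ∈ l, ext0 Pstar (x - z) p = X p - 1 := by
      intro p hp
      have hpC := hlC p hp
      have hpP := hlP p hp
      rw [ext0, dif_pos hpP]
      simp only [Pi.sub_apply]
      rw [hX, extFun]
      simp only [dif_neg hpP]
      rw [hz]
      simp [hpC]
    rw [sum_map_shift l X _ hmem, hend a ha, hend b hb]
    have hrk : r b = r a + l.length + 1 := rank_chain r hr l a b hsc.2
    have hrk' : (r b : ℝ) = (r a : ℝ) + l.length + 1 := by exact_mod_cast hrk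
    linarith
  -- the H-description of Q
  have hQdesc : Q = {y : {p : P // p ∉ Pstar} → ℝ | ∀ α ∈ D, ∑ q, α q * y q ≤ 1} := by
    apply Set.Subset.antisymm
    · intro y hy
      rw [hQ] at hy
      obtain ⟨x, hx, rfl⟩ := hy
      intro α hα
      obtain ⟨h1, h2, h3⟩ := hx
      obtain (⟨p, hpC, rfl⟩ | ⟨a, b, l, ha, hb, hsc, rfl⟩) := hα
      · show ∑ q, (if q = p then (-1 : ℝ) else 0) * (x - z) q ≤ 1
        rw [sum_negdelta]
        have h0 : 0 ≤ extFun Pstar lam x p.1 := h2 p.1 hpC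
        rw [extFun] at h0
        simp only [dif_neg p.2] at h0
        have hzp : z p = 1 := by rw [hz]; simp [hpC]
        have hxp : x ⟨p.1, p.2⟩ = x p := rfl
        simp only [Pi.sub_apply, hzp]
        rw [hxp] at h0
        linarith
      · show ∑ q, chainFun Pstar a b l q * (x - z) q ≤ 1
        rw [bridge x a b l ha hb hsc]
        have := h3 a b l ha hb hsc
        linarith
    · intro y hy
      rw [hQ]
      refine ⟨y + z, ?_, by ext q; simp⟩
      refine ⟨fun a ha => ?_, fun p hp => ?_, fun a b l ha hb hsc => ?_⟩
      · rw [extFun]; simp [ha]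
      · have hpP : p ∉ Pstar := hCP p hp
        rw [extFun]
        simp only [dif_neg hpP]
        have hneg := hy (fun q => if q = (⟨p, hpP⟩ : {p : P // p ∉ Pstar}) then (-1 : ℝ) else 0)
          (Or.inl ⟨⟨p, hpP⟩, hp, rfl⟩)
        rw [sum_negdelta] at hneg
        have hzp : z ⟨p, hpP⟩ = 1 := by rw [hz]; simp [hp]
        simp only [Pi.add_apply, hzp]
        linarith
      · have hineq := hy (chainFun Pstar a b l) (Or.inr ⟨a, b, l, ha, hb, hsc, rfl⟩)
        have hb' := bridge (y + z) a b l ha hb hsc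
        have hyz : (y + z) - z = y := add_sub_cancel_right y z
        rw [hyz] at hb'
        rw [hb'] at hineq
        linarith
  -- D is finite with {-1,0,1}-coordinates
  have hDS : ∀ α ∈ D, ∀ q : {p : P // p ∉ Pstar}, α q ∈ ({-1, 0, 1} : Set ℝ) := by
    rintro α (⟨p, hpC, rfl⟩ | ⟨a, b, l, ha, hb, hsc, rfl⟩) q
    · by_cases h : q = p <;> simp [h]
    · exact chainFun_mem Pstar a b l hsc.2 q
  have hDfin : D.Finite := by
    have hS : ({α : {p : P // p ∉ Pstar} → ℝ | ∀ q, α q ∈ ({-1, 0, 1} : Set ℝ)}).Finite := by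
      have hfin3 : ({-1, 0, 1} : Set ℝ).Finite := (Set.finite_singleton 1).insert 0 |>.insert (-1)
      have hpi := Set.Finite.pi (fun q : {p : P // p ∉ Pstar} => hfin3)
      convert hpi using 1
      ext α
      simp [Set.mem_pi]
    exact hS.subset (fun α hα => hDS α hα)
  set A : Finset ({p : P // p ∉ Pstar} → ℝ) := insert 0 hDfin.toFinset with hA
  have hAD : ∀ α ∈ D, α ∈ A := fun α hα =>
    Finset.mem_insert_of_mem (hDfin.mem_toFinset.2 hα)
  constructor
  · -- 0 ∈ interior Q
    set U : Set ({p : P // p ∉ Pstar} → ℝ) := {x | ∀ α ∈ hDfin.toFinset, ∑ q, α q * x q < 1} with hU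
    have hUopen : IsOpen U := by
      have : U = ⋂ α ∈ hDfin.toFinset, {x : {p : P // p ∉ Pstar} → ℝ | ∑ q, α q * x q < 1} := by
        ext x; simp [hU]
      rw [this]
      refine isOpen_biInter_finset (fun α _ => ?_)
      exact isOpen_lt (continuous_finset_sum _
        (fun q _ => (continuous_const.mul (continuous_apply q)))) continuous_const
    have hUsub : U ⊆ Q := by
      intro x hx
      rw [hQdesc]
      exact fun α hα => le_of_lt (hx α (hDfin.mem_toFinset.2 hα))
    have hU0 : (0 : {p : P // p ∉ Pstar} → ℝ) ∈ U := by
      intro α _; simp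
    exact interior_maximal hUsub hUopen hU0
  · refine ⟨A, ?_, ?_⟩
    · -- lattice points
      intro α hα p
      rw [hA, Finset.mem_insert] at hα
      rcases hα with rfl | hα
      · exact ⟨0, by simp⟩
      · have := hDS α (hDfin.mem_toFinset.1 hα) p
        rcases this with h | h | h
        · exact ⟨-1, by rw [h]; norm_num⟩
        · exact ⟨0, by rw [h]; norm_num⟩
        · exact ⟨1, by rw [h]; norm_num⟩
    · apply Set.Subset.antisymm
      · -- polarDual Q ⊆ convexHull A
        intro β hβ
        by_contra hnot
        have hKconv : Convex ℝ (convexHull ℝ (A : Set ({p : P // p ∉ Pstar} → ℝ))) := convex_convexHull ℝ _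
        have hKcl : IsClosed (convexHull ℝ (A : Set ({p : P // p ∉ Pstar} → ℝ))) :=
          (A.finite_toSet.isCompact_convexHull ℝ).isClosed
        obtain ⟨f, u, hfu, hub⟩ := geometric_hahn_banach_closed_point hKconv hKcl hnot
        have h0K : (0 : {p : P // p ∉ Pstar} → ℝ) ∈ convexHull ℝ (A : Set ({p : P // p ∉ Pstar} → ℝ)) :=
          subset_convexHull ℝ _ (by simp [hA])
        have hu0 : 0 < u := by simpa using hfu 0 h0K
        set x₀ : {p : P // p ∉ Pstar} → ℝ := fun q => u⁻¹ * f (fun j => if q = j then 1 else 0) with hx₀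
        have hf : ∀ w : {p : P // p ∉ Pstar} → ℝ, f w = ∑ q, w q * f (fun j => if q = j then 1 else 0) := by
          intro w
          conv_lhs => rw [pi_eq_sum_univ w]
          rw [map_sum]
          exact Finset.sum_congr rfl (fun q _ => by rw [f.map_smul]; rfl)
        have hpair : ∀ α : {p : P // p ∉ Pstar} → ℝ, ∑ q, α q * x₀ q = u⁻¹ * f α := by
          intro α
          rw [hf α, Finset.mul_sum]
          exact Finset.sum_congr rfl (fun q _ => by rw [hx₀]; ring)
        have hx₀Q : x₀ ∈ Q := by
          rw [hQdesc]
          intro α hα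
          rw [hpair]
          have hflt : f α < u := hfu α (subset_convexHull ℝ _ (hAD α hα))
          calc u⁻¹ * f α ≤ u⁻¹ * u :=
                mul_le_mul_of_nonneg_left hflt.le (inv_nonneg.2 hu0.le)
            _ = 1 := inv_mul_cancel₀ hu0.ne'
        have hle := hβ x₀ hx₀Q
        rw [hpair] at hle
        have : f β ≤ u := by
          have h2 := mul_le_mul_of_nonneg_left hle hu0.le
          rw [← mul_assoc, mul_inv_cancel₀ hu0.ne', one_mul, mul_one] at h2
          exact h2
        linarith
      · -- convexHull A ⊆ polarDual Q
        have hconv : Convex ℝ (polarDual Q) := by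
          intro a ha b hb s t hs ht hst
          intro x hx
          have hsum : ∀ q : {p : P // p ∉ Pstar}, (s • a + t • b) q * x q
              = s * (a q * x q) + t * (b q * x q) := by
            intro q
            simp only [Pi.add_apply, Pi.smul_apply, smul_eq_mul]
            ring
          rw [Finset.sum_congr rfl (fun q _ => hsum q), Finset.sum_add_distrib,
            ← Finset.mul_sum, ← Finset.mul_sum]
          have h1 := mul_le_mul_of_nonneg_left (ha x hx) hs
          have h2 := mul_le_mul_of_nonneg_left (hb x hx) ht
          linarith
        apply convexHull_min ?_ hconv
        intro α hα
        rw [hA] at hα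
        simp only [Finset.coe_insert, Set.mem_insert_iff, Finset.mem_coe] at hα
        rcases hα with rfl | hα
        · intro x _; simp
        · intro x hx
          rw [hQdesc] at hx
          exact hx α (hDfin.mem_toFinset.1 hα)
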